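/- Let R be a standard graded K-algebra with finite-dimensional graded components. If R has the weak Lefschetz property (there exists a linear form ℓ such that multiplication by ℓ from R_i to R_{i+1} has full rank for all i ≥ 0), then the Hilbert function of R is either increasing or unimodal. -/
import Mathlib


/-- A standard graded algebra over a field `K` with finite dimensional graded components
having the weak Lefschetz property has an increasing (i.e. non-decreasing) or
unimodal Hilbert function. -/
theorem wlp_implies_increasing_or_unimodal_hilbert_function
    {K A : Type} [Field K] [CharZero K] [CommRing A] [Algebra K A]
    (𝒜 : ℕ → Submodule K A) [GradedAlgebra 𝒜]
    (hfin : ∀ i : ℕ, Module.Finite K (𝒜 i))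
    (h0 : 𝒜 0 = 1)
    (hstd : ∀ n : ℕ, 𝒜 (n + 1) = 𝒜 1 * 𝒜 n)
    (hWLP : ∃ e ∈ 𝒜 1, ∀ i : ℕ,
      (∀ a ∈ 𝒜 i, ∀ b ∈ 𝒜 i, e * a = e * b → a = b) ∨
      (∀ c ∈ 𝒜 (i + 1), ∃ a ∈ 𝒜 i, e * a = c)) :
    Monotone (fun i : ℕ => Module.finrank K (𝒜 i)) ∨
    ∃ k : ℕ,
      (∀ i j : ℕ, i ≤ j → j ≤ k → Module.finrank K (𝒜 i) ≤ Module.finrank K (𝒜 j)) ∧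
      (∀ i j : ℕ, k ≤ i → i ≤ j → Module.finrank K (𝒜 j) ≤ Module.finrank K (𝒜 i)) := by
  classical
  obtain ⟨e, he, hWLP⟩ := hWLP
  -- membership of products with degree-1 elements
  have hmulmem : ∀ (i : ℕ) (x : A), x ∈ 𝒜 1 → ∀ a ∈ 𝒜 i, x * a ∈ 𝒜 (i + 1) := by
    intro i x hx a ha
    have := SetLike.mul_mem_graded hx ha
    rwa [add_comm] at this
  -- injectivity at step i implies rank increase
  have hinj_rank : ∀ i, (∀ a ∈ 𝒜 i, ∀ b ∈ 𝒜 i, e * a = e * b → a = b) →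
      Module.finrank K (𝒜 i) ≤ Module.finrank K (𝒜 (i + 1)) := by
    intro i hi
    haveI := hfin i; haveI := hfin (i + 1)
    let f : 𝒜 i →ₗ[K] 𝒜 (i + 1) :=
      { toFun := fun a => ⟨e * a, hmulmem i e he a a.2⟩
        map_add' := by intro a b; ext; simp [mul_add]
        map_smul' := by intro c a; ext; simp [Algebra.mul_smul_comm] }
    apply LinearMap.finrank_le_finrank_of_injective (f := f)
    intro a b hab
    have h' : e * (a : A) = e * (b : A) := congrArg Subtype.val hab
    exact Subtype.ext (hi a a.2 b b.2 h')
  -- surjectivity at step i implies rank decrease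
  have hsurj_rank : ∀ i, (∀ c ∈ 𝒜 (i + 1), ∃ a ∈ 𝒜 i, e * a = c) →
      Module.finrank K (𝒜 (i + 1)) ≤ Module.finrank K (𝒜 i) := by
    intro i hi
    haveI := hfin i; haveI := hfin (i + 1)
    let f : 𝒜 i →ₗ[K] 𝒜 (i + 1) :=
      { toFun := fun a => ⟨e * a, hmulmem i e he a a.2⟩
        map_add' := by intro a b; ext; simp [mul_add]
        map_smul' := by intro c a; ext; simp [Algebra.mul_smul_comm] }
    have hs : Function.Surjective f := by
      intro c
      obtain ⟨a, ha, hac⟩ := hi c c.2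
      exact ⟨⟨a, ha⟩, Subtype.ext hac⟩
    have hrange : LinearMap.range f = ⊤ := LinearMap.range_eq_top.mpr hs
    calc Module.finrank K (𝒜 (i + 1))
        = Module.finrank K (⊤ : Submodule K (𝒜 (i + 1))) := (finrank_top K _).symm
      _ = Module.finrank K (LinearMap.range f) := by rw [hrange]
      _ ≤ Module.finrank K (𝒜 i) := LinearMap.finrank_range_le f
  -- surjectivity propagates upwards
  have hsurj_step : ∀ i, (∀ c ∈ 𝒜 (i + 1), ∃ a ∈ 𝒜 i, e * a = c) →
      (∀ c ∈ 𝒜 (i + 1 + 1), ∃ a ∈ 𝒜 (i + 1), e * a = c) := by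
    intro i hi c hc
    rw [hstd (i + 1)] at hc
    refine Submodule.mul_induction_on hc ?_ ?_
    · intro x hx y hy
      obtain ⟨a, ha, rfl⟩ := hi y hy
      exact ⟨x * a, hmulmem i x hx a ha, by ring⟩
    · rintro c1 c2 ⟨a1, ha1, rfl⟩ ⟨a2, ha2, rfl⟩
      exact ⟨a1 + a2, (𝒜 (i + 1)).add_mem ha1 ha2, by ring⟩
  by_cases hall : ∀ i, ∀ a ∈ 𝒜 i, ∀ b ∈ 𝒜 i, e * a = e * b → a = b
  · left
    exact monotone_nat_of_le_succ fun i => hinj_rank i (hall i)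
  · right
    have hex : ∃ i, ¬ (∀ a ∈ 𝒜 i, ∀ b ∈ 𝒜 i, e * a = e * b → a = b) := not_forall.mp hall
    set k := Nat.find hex with hkdef
    have hk : ¬ (∀ a ∈ 𝒜 k, ∀ b ∈ 𝒜 k, e * a = e * b → a = b) := Nat.find_spec hex
    have hlt : ∀ i < k, ∀ a ∈ 𝒜 i, ∀ b ∈ 𝒜 i, e * a = e * b → a = b := by
      intro i hi
      exact not_not.mp (Nat.find_min hex hi)
    have hsurjk : ∀ c ∈ 𝒜 (k + 1), ∃ a ∈ 𝒜 k, e * a = c := (hWLP k).resolve_left hk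
    have hsurjall : ∀ j, k ≤ j → ∀ c ∈ 𝒜 (j + 1), ∃ a ∈ 𝒜 j, e * a = c := by
      intro j hj
      induction j, hj using Nat.le_induction with
      | base => exact hsurjk
      | succ n hn ih => exact hsurj_step n ih
    refine ⟨k, ?_, ?_⟩
    · intro i j hij hjk
      induction j, hij using Nat.le_induction with
      | base => exact le_refl _
      | succ n hn ih =>
          have hnk : n < k := lt_of_lt_of_le (Nat.lt_succ_self n) hjk
          exact le_trans (ih (le_of_lt hnk)) (hinj_rank n (hlt n hnk))
    · intro i j hki hij
      induction j, hij using Nat.le_induction with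
      | base => exact le_refl _
      | succ n hn ih =>
          exact le_trans (hsurj_rank n (hsurjall n (le_trans hki hn))) ih
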